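/- For every integer m ≥ 1 one has the equality sup{ |{t ∈ [0,∞) : |Λ_m f(t)| ≥ 1}| / ∫₀^∞ |f(t)| dt : f ∈ F^sp_m } = sup{ W(b,d,m) : (b,d) ∈ S_m }. -/

import Mathlib

open MeasureTheory Real Set

set_option maxHeartbeats 1000000

/-- The operator `Λ_m`. -/
noncomputable def Lam (m : ℕ) (f : ℝ → ℝ) (t : ℝ) : ℝ :=
  ((1 + (m : ℝ)) / t ^ (1 + (m : ℝ) / 2)) * (∫ s in (0:ℝ)..t, f s * s ^ ((m : ℝ) / 2)) - f t

/-- The coefficient `D(b,m) = (2(1+m)/m)(2 b^{-m/2} - 1)`. -/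
noncomputable def Dcoef (m : ℕ) (b : ℝ) : ℝ :=
  (2 * (1 + (m : ℝ)) / (m : ℝ)) * (2 * b ^ (-(m : ℝ) / 2) - 1)

/-- The parameter set `S_m`. -/
def Sset (m : ℕ) : Set (ℝ × ℝ) :=
  {p : ℝ × ℝ | 1 < p.1 ∧ p.1 < p.2 ∧ 0 < Dcoef m p.1 ∧
    -(2 + (m : ℝ)) / (m : ℝ) + Dcoef m p.1 * p.1 ^ ((m : ℝ) / 2) < 0 ∧
    0 < -(2 + (m : ℝ)) / (m : ℝ) + Dcoef m p.1 * p.2 ^ ((m : ℝ) / 2) ∧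
    -(2 + (m : ℝ)) / (m : ℝ) + Dcoef m p.1 * p.2 ^ ((m : ℝ) / 2) < 2}

/-- The function `f_{b,d,m}` from the class `F^sp_m`. -/
noncomputable def fsp (m : ℕ) (b d t : ℝ) : ℝ :=
  if 1 < t ∧ t ≤ b then (2 + (m : ℝ)) / (m : ℝ) - (2 * (1 + (m : ℝ)) / (m : ℝ)) * t ^ ((m : ℝ) / 2)
  else if b < t ∧ t ≤ d then -(2 + (m : ℝ)) / (m : ℝ) + Dcoef m b * t ^ ((m : ℝ) / 2)
  else 0

/-- `t₀(b,m)`. -/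
noncomputable def t0 (m : ℕ) (b : ℝ) : ℝ :=
  ((2 + (m : ℝ)) / (2 * (1 + (m : ℝ)))) ^ (2 / (m : ℝ)) *
    (2 * b ^ (-(m : ℝ) / 2) - 1) ^ (-(2 / (m : ℝ)))

/-- The denominator of `W(b,d,m)`. -/
noncomputable def denom (m : ℕ) (b d : ℝ) : ℝ :=
  (m : ℝ) / (2 + (m : ℝ)) - ((2 + (m : ℝ)) / (m : ℝ)) * d - (2 * (m : ℝ) / (2 + (m : ℝ))) * b
    + (4 * (1 + (m : ℝ)) / ((m : ℝ) * (2 + (m : ℝ)))) * (2 * b ^ (-(m : ℝ) / 2) - 1)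
      * d ^ (1 + (m : ℝ) / 2)
    + 2 * t0 m b

/-- `W(b,d,m)`. -/
noncomputable def Wf (m : ℕ) (b d : ℝ) : ℝ := (d - 1) / denom m b d

/-- The weak-type ratio of `f_{b,d,m}` under `Λ_m`. -/
noncomputable def ratio (m : ℕ) (b d : ℝ) : ℝ :=
  (MeasureTheory.volume {t : ℝ | 0 ≤ t ∧ 1 ≤ |Lam m (fsp m b d) t|}).toReal /
    ∫ t in Set.Ici (0 : ℝ), |fsp m b d t|

/-- The restricted weak-type constant of `Λ_m` over the class `F^sp_m`. -/
noncomputable def Rsp (m : ℕ) : ℝ :=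
  sSup {r : ℝ | ∃ b d : ℝ, (b, d) ∈ Sset m ∧ r = ratio m b d}

namespace Aux14

lemma ii_congr {f g : ℝ → ℝ} {u v : ℝ} (hg : IntervalIntegrable g volume u v)
    (h : ∀ s ∈ Set.uIoc u v, f s = g s) : IntervalIntegrable f volume u v := by
  rw [intervalIntegrable_iff] at hg ⊢
  exact hg.congr_fun (fun s hs => (h s hs).symm) measurableSet_uIoc

lemma cont_aux (A B p : ℝ) (hp : 0 ≤ p) (s : Set ℝ) :
    ContinuousOn (fun x : ℝ => (A + B * x ^ p) * x ^ p) s := by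
  have h : ContinuousOn (fun x : ℝ => x ^ p) s :=
    fun x _ => (Real.continuousAt_rpow_const x p (Or.inr hp)).continuousWithinAt
  exact (continuousOn_const.add (continuousOn_const.mul h)).mul h

lemma cont_aux2 (A B p : ℝ) (hp : 0 ≤ p) (s : Set ℝ) :
    ContinuousOn (fun x : ℝ => A + B * x ^ p) s := by
  have h : ContinuousOn (fun x : ℝ => x ^ p) s :=
    fun x _ => (Real.continuousAt_rpow_const x p (Or.inr hp)).continuousWithinAt
  exact continuousOn_const.add (continuousOn_const.mul h)

lemma int_eval1 (p A B u v : ℝ) (hp : 0 < p) (h0u : 0 < u) (huv : u ≤ v) :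
    ∫ s in u..v, (A + B * s ^ p) * s ^ p
      = A * (v ^ (p+1) - u ^ (p+1)) / (p+1) + B * (v ^ (2*p+1) - u ^ (2*p+1)) / (2*p+1) := by
  have h1 : ∫ s in u..v, (A + B * s ^ p) * s ^ p
      = ∫ s in u..v, (A * s ^ p + B * s ^ (2*p)) := by
    apply intervalIntegral.integral_congr_ae
    filter_upwards with s hs
    rw [Set.uIoc_of_le huv] at hs
    have hs0 : (0:ℝ) < s := lt_trans h0u hs.1
    rw [show (2*p) = p + p by ring, Real.rpow_add hs0]
    ring
  have i1 : IntervalIntegrable (fun s : ℝ => A * s ^ p) volume u v :=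
    (intervalIntegral.intervalIntegrable_rpow' (by linarith)).const_mul A
  have i2 : IntervalIntegrable (fun s : ℝ => B * s ^ (2*p)) volume u v :=
    (intervalIntegral.intervalIntegrable_rpow' (by linarith)).const_mul B
  rw [h1, intervalIntegral.integral_add i1 i2, intervalIntegral.integral_const_mul,
    intervalIntegral.integral_const_mul, integral_rpow (Or.inl (by linarith)),
    integral_rpow (Or.inl (by linarith))]
  ring

lemma int_eval2 (p A B u v : ℝ) (hp : 0 < p) :
    ∫ s in u..v, (A + B * s ^ p)
      = A * (v - u) + B * (v ^ (p+1) - u ^ (p+1)) / (p+1) := by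
  have i2 : IntervalIntegrable (fun s : ℝ => B * s ^ p) volume u v :=
    (intervalIntegral.intervalIntegrable_rpow' (by linarith)).const_mul B
  rw [intervalIntegral.integral_add (intervalIntegrable_const) i2,
    intervalIntegral.integral_const, intervalIntegral.integral_const_mul,
    integral_rpow (Or.inl (by linarith))]
  simp only [smul_eq_mul]; ring

lemma fsp_out (m : ℕ) (b d t : ℝ) (hb : 1 < b) (hbd : b < d) (h : t ≤ 1 ∨ d < t) :
    fsp m b d t = 0 := by
  simp only [fsp]
  split_ifs with h1 h2
  · exact absurd h1 (by rcases h with h | h <;> (rintro ⟨a1, a2⟩; linarith))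
  · exact absurd h2 (by rcases h with h | h <;> (rintro ⟨a1, a2⟩; linarith))
  · rfl

lemma fsp_br1 (m : ℕ) (b d t : ℝ) (h1 : 1 < t) (h2 : t ≤ b) :
    fsp m b d t = (2 + (m : ℝ)) / (m : ℝ)
      - (2 * (1 + (m : ℝ)) / (m : ℝ)) * t ^ ((m : ℝ) / 2) := by
  simp only [fsp]; rw [if_pos ⟨h1, h2⟩]

lemma fsp_br2 (m : ℕ) (b d t : ℝ) (hb : 1 < b) (h1 : b < t) (h2 : t ≤ d) :
    fsp m b d t = -(2 + (m : ℝ)) / (m : ℝ) + Dcoef m b * t ^ ((m : ℝ) / 2) := by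
  simp only [fsp]
  rw [if_neg (fun h => absurd h.2 (not_le.mpr h1)), if_pos ⟨h1, h2⟩]

section core

variable {m : ℕ} {b d : ℝ}

lemma int_zero (hb : 1 < b) (hbd : b < d) {t : ℝ} (ht0 : 0 ≤ t) (ht1 : t ≤ 1) :
    ∫ s in (0:ℝ)..t, fsp m b d s * s ^ ((m:ℝ)/2) = 0 := by
  have h : (∫ s in (0:ℝ)..t, fsp m b d s * s ^ ((m:ℝ)/2)) = ∫ _ in (0:ℝ)..t, (0:ℝ) := by
    apply intervalIntegral.integral_congr_ae
    filter_upwards with s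
    rw [Set.uIoc_of_le ht0]
    intro hs
    rw [fsp_out m b d s hb hbd (Or.inl (le_trans hs.2 ht1)), zero_mul]
  rw [h, intervalIntegral.integral_zero]

lemma ii01 (hb : 1 < b) (hbd : b < d) :
    IntervalIntegrable (fun s => fsp m b d s * s ^ ((m:ℝ)/2)) volume 0 1 := by
  apply ii_congr (g := fun _ => (0:ℝ)) intervalIntegrable_const
  intro s hs
  rw [Set.uIoc_of_le (by norm_num : (0:ℝ) ≤ 1)] at hs
  rw [fsp_out m b d s hb hbd (Or.inl hs.2), zero_mul]

lemma ii1t (hb : 1 < b) {t : ℝ} (h1 : 1 ≤ t) (h2 : t ≤ b) :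
    IntervalIntegrable (fun s => fsp m b d s * s ^ ((m:ℝ)/2)) volume 1 t := by
  apply ii_congr (g := fun s => ((2+(m:ℝ))/(m:ℝ) + (-(2*(1+(m:ℝ))/(m:ℝ))) * s ^ ((m:ℝ)/2))
      * s ^ ((m:ℝ)/2))
    ((cont_aux _ _ _ (by positivity) _).intervalIntegrable)
  intro s hs
  rw [Set.uIoc_of_le h1] at hs
  rw [fsp_br1 m b d s hs.1 (le_trans hs.2 h2)]
  ring

lemma iibt (hb : 1 < b) {t : ℝ} (h1 : b ≤ t) (h2 : t ≤ d) :
    IntervalIntegrable (fun s => fsp m b d s * s ^ ((m:ℝ)/2)) volume b t := by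
  apply ii_congr (g := fun s => (-((2+(m:ℝ))/(m:ℝ)) + Dcoef m b * s ^ ((m:ℝ)/2))
      * s ^ ((m:ℝ)/2))
    ((cont_aux _ _ _ (by positivity) _).intervalIntegrable)
  intro s hs
  rw [Set.uIoc_of_le h1] at hs
  rw [fsp_br2 m b d s hb hs.1 (le_trans hs.2 h2)]
  ring

lemma iidt (hb : 1 < b) (hbd : b < d) {t : ℝ} (h1 : d ≤ t) :
    IntervalIntegrable (fun s => fsp m b d s * s ^ ((m:ℝ)/2)) volume d t := by
  apply ii_congr (g := fun _ => (0:ℝ)) intervalIntegrable_const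
  intro s hs
  rw [Set.uIoc_of_le h1] at hs
  rw [fsp_out m b d s hb hbd (Or.inr hs.1), zero_mul]

lemma int_A (hm : 1 ≤ m) (hb : 1 < b) (hbd : b < d) {t : ℝ} (h1 : 1 ≤ t) (h2 : t ≤ b) :
    ∫ s in (0:ℝ)..t, fsp m b d s * s ^ ((m:ℝ)/2)
      = 2/(m:ℝ) * (t ^ ((m:ℝ)/2+1) - t ^ (2*((m:ℝ)/2)+1)) := by
  have hm1 : (1:ℝ) ≤ m := by exact_mod_cast hm
  have hm0 : (m:ℝ) ≠ 0 := by linarith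
  have hp : (0:ℝ) < (m:ℝ)/2 := by linarith
  rw [← intervalIntegral.integral_add_adjacent_intervals (ii01 hb hbd) (ii1t hb h1 h2),
    int_zero hb hbd zero_le_one le_rfl, zero_add]
  have e1 : ∫ s in (1:ℝ)..t, fsp m b d s * s ^ ((m:ℝ)/2)
      = ∫ s in (1:ℝ)..t, ((2+(m:ℝ))/(m:ℝ) + (-(2*(1+(m:ℝ))/(m:ℝ))) * s ^ ((m:ℝ)/2))
          * s ^ ((m:ℝ)/2) := by
    apply intervalIntegral.integral_congr_ae
    filter_upwards with s
    rw [Set.uIoc_of_le h1]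
    intro hs
    rw [fsp_br1 m b d s hs.1 (le_trans hs.2 h2)]
    ring
  rw [e1, int_eval1 _ _ _ _ _ hp one_pos h1, Real.one_rpow, Real.one_rpow]
  have d1 : ((m:ℝ)/2+1) ≠ 0 := by linarith
  have d2 : (2*((m:ℝ)/2)+1) ≠ 0 := by linarith
  field_simp
  ring

lemma int_B (hm : 1 ≤ m) (hb : 1 < b) (hbd : b < d)
    {t : ℝ} (h1 : b ≤ t) (h2 : t ≤ d) :
    ∫ s in (0:ℝ)..t, fsp m b d s * s ^ ((m:ℝ)/2)
      = 2/(m:ℝ) * (-(t ^ ((m:ℝ)/2+1))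
          + (2 * b ^ (-(m:ℝ)/2) - 1) * t ^ (2*((m:ℝ)/2)+1)) := by
  have hm1 : (1:ℝ) ≤ m := by exact_mod_cast hm
  have hm0 : (m:ℝ) ≠ 0 := by linarith
  have hp : (0:ℝ) < (m:ℝ)/2 := by linarith
  have hb0 : (0:ℝ) < b := by linarith
  rw [← intervalIntegral.integral_add_adjacent_intervals
      ((ii01 hb hbd).trans (ii1t hb hb.le le_rfl)) (iibt hb h1 h2),
    int_A hm hb hbd hb.le le_rfl]
  have e1 : ∫ s in b..t, fsp m b d s * s ^ ((m:ℝ)/2)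
      = ∫ s in b..t, (-((2+(m:ℝ))/(m:ℝ)) + Dcoef m b * s ^ ((m:ℝ)/2)) * s ^ ((m:ℝ)/2) := by
    apply intervalIntegral.integral_congr_ae
    filter_upwards with s
    rw [Set.uIoc_of_le h1]
    intro hs
    rw [fsp_br2 m b d s hb hs.1 (le_trans hs.2 h2)]
    ring
  rw [e1, int_eval1 _ _ _ _ _ hp hb0 h1]
  have hBpos : (0:ℝ) < b ^ ((m:ℝ)/2) := Real.rpow_pos_of_pos hb0 _
  have hbneg : b ^ (-(m:ℝ)/2) = (b ^ ((m:ℝ)/2))⁻¹ := by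
    rw [show (-(m:ℝ)/2) = -((m:ℝ)/2) by ring, Real.rpow_neg hb0.le]
  have eb1 : b ^ ((m:ℝ)/2+1) = b ^ ((m:ℝ)/2) * b := by
    rw [Real.rpow_add hb0, Real.rpow_one]
  have eb2 : b ^ (2*((m:ℝ)/2)+1) = b ^ ((m:ℝ)/2) * (b ^ ((m:ℝ)/2) * b) := by
    rw [show 2*((m:ℝ)/2)+1 = (m:ℝ)/2 + ((m:ℝ)/2 + 1) by ring, Real.rpow_add hb0, eb1]
  have d1 : ((m:ℝ)/2+1) ≠ 0 := by linarith
  have d2 : (2*((m:ℝ)/2)+1) ≠ 0 := by linarith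
  simp only [Dcoef, hbneg, eb1, eb2]
  field_simp
  ring

lemma int_C (hm : 1 ≤ m) (hb : 1 < b) (hbd : b < d) {t : ℝ} (h1 : d ≤ t) :
    ∫ s in (0:ℝ)..t, fsp m b d s * s ^ ((m:ℝ)/2)
      = 2/(m:ℝ) * (-(d ^ ((m:ℝ)/2+1))
          + (2 * b ^ (-(m:ℝ)/2) - 1) * d ^ (2*((m:ℝ)/2)+1)) := by
  have hzero : ∫ s in d..t, fsp m b d s * s ^ ((m:ℝ)/2) = 0 := by
    have h : (∫ s in d..t, fsp m b d s * s ^ ((m:ℝ)/2)) = ∫ _ in d..t, (0:ℝ) := by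
      apply intervalIntegral.integral_congr_ae
      filter_upwards with s
      rw [Set.uIoc_of_le h1]
      intro hs
      rw [fsp_out m b d s hb hbd (Or.inr hs.1), zero_mul]
    rw [h, intervalIntegral.integral_zero]
  rw [← intervalIntegral.integral_add_adjacent_intervals
      (((ii01 hb hbd).trans (ii1t hb hb.le le_rfl)).trans (iibt hb hbd.le le_rfl))
      (iidt hb hbd h1),
    int_B hm hb hbd hbd.le le_rfl, hzero, add_zero]

end core

section lam

variable {m : ℕ} {b d : ℝ}

lemma lam_zero (hb : 1 < b) (hbd : b < d) {t : ℝ} (ht0 : 0 ≤ t) (ht1 : t ≤ 1) :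
    Lam m (fsp m b d) t = 0 := by
  rw [Lam, int_zero hb hbd ht0 ht1, fsp_out m b d t hb hbd (Or.inl ht1)]
  simp

lemma lam_A (hm : 1 ≤ m) (hb : 1 < b) (hbd : b < d) {t : ℝ} (h1 : 1 < t) (h2 : t ≤ b) :
    Lam m (fsp m b d) t = 1 := by
  have hm1 : (1:ℝ) ≤ m := by exact_mod_cast hm
  have hm0 : (m:ℝ) ≠ 0 := by linarith
  have ht0 : (0:ℝ) < t := by linarith
  rw [Lam, int_A hm hb hbd h1.le h2, fsp_br1 m b d t h1 h2,
    show (1 + (m:ℝ)/2) = ((m:ℝ)/2 + 1) by ring]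
  have hT : (0:ℝ) < t ^ ((m:ℝ)/2) := Real.rpow_pos_of_pos ht0 _
  have e1 : t ^ ((m:ℝ)/2+1) = t ^ ((m:ℝ)/2) * t := by
    rw [Real.rpow_add ht0, Real.rpow_one]
  have e2 : t ^ (2*((m:ℝ)/2)+1) = t ^ ((m:ℝ)/2) * (t ^ ((m:ℝ)/2) * t) := by
    rw [show 2*((m:ℝ)/2)+1 = (m:ℝ)/2 + ((m:ℝ)/2 + 1) by ring, Real.rpow_add ht0, e1]
  rw [e1, e2]
  field_simp
  ring

lemma lam_B (hm : 1 ≤ m) (hb : 1 < b) (hbd : b < d) {t : ℝ} (h1 : b < t) (h2 : t ≤ d) :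
    Lam m (fsp m b d) t = -1 := by
  have hm1 : (1:ℝ) ≤ m := by exact_mod_cast hm
  have hm0 : (m:ℝ) ≠ 0 := by linarith
  have hb0 : (0:ℝ) < b := by linarith
  have ht0 : (0:ℝ) < t := by linarith
  rw [Lam, int_B hm hb hbd h1.le h2, fsp_br2 m b d t hb h1 h2,
    show (1 + (m:ℝ)/2) = ((m:ℝ)/2 + 1) by ring]
  have hT : (0:ℝ) < t ^ ((m:ℝ)/2) := Real.rpow_pos_of_pos ht0 _
  have hB : (0:ℝ) < b ^ ((m:ℝ)/2) := Real.rpow_pos_of_pos hb0 _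
  have hbneg : b ^ (-(m:ℝ)/2) = (b ^ ((m:ℝ)/2))⁻¹ := by
    rw [show (-(m:ℝ)/2) = -((m:ℝ)/2) by ring, Real.rpow_neg hb0.le]
  have e1 : t ^ ((m:ℝ)/2+1) = t ^ ((m:ℝ)/2) * t := by
    rw [Real.rpow_add ht0, Real.rpow_one]
  have e2 : t ^ (2*((m:ℝ)/2)+1) = t ^ ((m:ℝ)/2) * (t ^ ((m:ℝ)/2) * t) := by
    rw [show 2*((m:ℝ)/2)+1 = (m:ℝ)/2 + ((m:ℝ)/2 + 1) by ring, Real.rpow_add ht0, e1]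
  simp only [Dcoef, hbneg, e1, e2]
  field_simp
  ring

lemma lam_C (hm : 1 ≤ m) (hb : 1 < b) (hbd : b < d)
    (h2 : 0 < -(2 + (m:ℝ)) / (m:ℝ) + Dcoef m b * d ^ ((m:ℝ)/2))
    (h3 : -(2 + (m:ℝ)) / (m:ℝ) + Dcoef m b * d ^ ((m:ℝ)/2) < 2)
    {t : ℝ} (ht : d < t) : |Lam m (fsp m b d) t| < 1 := by
  have hm1 : (1:ℝ) ≤ m := by exact_mod_cast hm
  have hm0 : (m:ℝ) ≠ 0 := by linarith
  have hd0 : (0:ℝ) < d := by linarith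
  have ht0 : (0:ℝ) < t := by linarith
  rw [Lam, int_C hm hb hbd ht.le, fsp_out m b d t hb hbd (Or.inr ht), sub_zero,
    show (1 + (m:ℝ)/2) = ((m:ℝ)/2 + 1) by ring, div_mul_eq_mul_div, abs_div,
    abs_of_pos (Real.rpow_pos_of_pos ht0 ((m:ℝ)/2+1))]
  rw [div_lt_one (Real.rpow_pos_of_pos ht0 ((m:ℝ)/2+1))]
  have hDd : (0:ℝ) < d ^ ((m:ℝ)/2) := Real.rpow_pos_of_pos hd0 _
  have e1 : d ^ ((m:ℝ)/2+1) = d ^ ((m:ℝ)/2) * d := by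
    rw [Real.rpow_add hd0, Real.rpow_one]
  have e2 : d ^ (2*((m:ℝ)/2)+1) = d ^ ((m:ℝ)/2) * (d ^ ((m:ℝ)/2) * d) := by
    rw [show 2*((m:ℝ)/2)+1 = (m:ℝ)/2 + ((m:ℝ)/2 + 1) by ring, Real.rpow_add hd0, e1]
  have key : |(1 + (m:ℝ)) * (2/(m:ℝ) * (-(d ^ ((m:ℝ)/2+1))
      + (2 * b ^ (-(m:ℝ)/2) - 1) * d ^ (2*((m:ℝ)/2)+1)))| < d ^ ((m:ℝ)/2+1) := by
    have hq1 : -1 < -(2 + (m:ℝ)) / (m:ℝ) + Dcoef m b * d ^ ((m:ℝ)/2) - 1 := by linarith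
    have hq2 : -(2 + (m:ℝ)) / (m:ℝ) + Dcoef m b * d ^ ((m:ℝ)/2) - 1 < 1 := by linarith
    have expand : (1 + (m:ℝ)) * (2/(m:ℝ) * (-(d ^ ((m:ℝ)/2+1))
        + (2 * b ^ (-(m:ℝ)/2) - 1) * d ^ (2*((m:ℝ)/2)+1)))
        = (-(2 + (m:ℝ)) / (m:ℝ) + Dcoef m b * d ^ ((m:ℝ)/2) - 1) * (d ^ ((m:ℝ)/2) * d) := by
      rw [e1, e2]
      simp only [Dcoef]
      field_simp
      ring
    rw [expand, e1, abs_mul, abs_of_pos (mul_pos hDd hd0)]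
    have habs : |(-(2 + (m:ℝ)) / (m:ℝ) + Dcoef m b * d ^ ((m:ℝ)/2) - 1)| < 1 :=
      abs_lt.mpr ⟨hq1, hq2⟩
    nlinarith [mul_pos hDd hd0]
  calc |(1 + (m:ℝ)) * (2/(m:ℝ) * (-(d ^ ((m:ℝ)/2+1))
      + (2 * b ^ (-(m:ℝ)/2) - 1) * d ^ (2*((m:ℝ)/2)+1)))|
      < d ^ ((m:ℝ)/2+1) := key
    _ < t ^ ((m:ℝ)/2+1) := Real.rpow_lt_rpow hd0.le ht (by linarith)

lemma level_set (hm : 1 ≤ m) (hb : 1 < b) (hbd : b < d)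
    (h2 : 0 < -(2 + (m:ℝ)) / (m:ℝ) + Dcoef m b * d ^ ((m:ℝ)/2))
    (h3 : -(2 + (m:ℝ)) / (m:ℝ) + Dcoef m b * d ^ ((m:ℝ)/2) < 2) :
    {t : ℝ | 0 ≤ t ∧ 1 ≤ |Lam m (fsp m b d) t|} = Set.Ioc 1 d := by
  ext t
  simp only [Set.mem_setOf_eq, Set.mem_Ioc]
  constructor
  · rintro ⟨ht0, habs⟩
    constructor
    · by_contra h
      push_neg at h
      rw [lam_zero hb hbd ht0 h] at habs
      norm_num at habs
    · by_contra h
      push_neg at h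
      exact absurd habs (not_le.mpr (lam_C hm hb hbd h2 h3 h))
  · rintro ⟨h1, h4⟩
    refine ⟨by linarith, ?_⟩
    rcases le_or_gt t b with h | h
    · rw [lam_A hm hb hbd h1 h]; norm_num
    · rw [lam_B hm hb hbd h h4]; norm_num

end lam

section tzero

variable {m : ℕ} {b d : ℝ}

lemma hXpos (hm : 1 ≤ m) (hD : 0 < Dcoef m b) : 0 < 2 * b ^ (-(m:ℝ)/2) - 1 := by
  have hm1 : (1:ℝ) ≤ m := by exact_mod_cast hm
  have hc2 : (0:ℝ) < 2 * (1 + (m:ℝ)) / (m:ℝ) := by positivity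
  by_contra h
  push_neg at h
  simp only [Dcoef] at hD
  nlinarith [mul_nonpos_of_nonneg_of_nonpos hc2.le h]

lemma t0_pos (hm : 1 ≤ m) (hD : 0 < Dcoef m b) : 0 < t0 m b := by
  have hm1 : (1:ℝ) ≤ m := by exact_mod_cast hm
  have hy : (0:ℝ) < (2 + (m:ℝ)) / (2 * (1 + (m:ℝ))) := by positivity
  exact mul_pos (Real.rpow_pos_of_pos hy _) (Real.rpow_pos_of_pos (hXpos hm hD) _)

lemma t0_spec (hm : 1 ≤ m) (hD : 0 < Dcoef m b) :
    Dcoef m b * (t0 m b) ^ ((m:ℝ)/2) = (2 + (m:ℝ)) / (m:ℝ) := by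
  have hm1 : (1:ℝ) ≤ m := by exact_mod_cast hm
  have hm0 : (m:ℝ) ≠ 0 := by linarith
  have hy : (0:ℝ) < (2 + (m:ℝ)) / (2 * (1 + (m:ℝ))) := by positivity
  have hX := hXpos hm hD
  rw [t0, Real.mul_rpow (Real.rpow_nonneg hy.le _) (Real.rpow_nonneg hX.le _),
    ← Real.rpow_mul hy.le, ← Real.rpow_mul hX.le,
    show (2/(m:ℝ)) * ((m:ℝ)/2) = 1 by field_simp; try ring,
    show (-(2/(m:ℝ))) * ((m:ℝ)/2) = -1 by field_simp; try ring,
    Real.rpow_one, Real.rpow_neg_one, Dcoef]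
  generalize 2 * b ^ (-(m:ℝ)/2) - 1 = X at hX ⊢
  field_simp

lemma t0_gt (hm : 1 ≤ m) (hb : 1 < b) (hD : 0 < Dcoef m b)
    (h1 : -(2 + (m:ℝ)) / (m:ℝ) + Dcoef m b * b ^ ((m:ℝ)/2) < 0) : b < t0 m b := by
  have hm1 : (1:ℝ) ≤ m := by exact_mod_cast hm
  have hp : (0:ℝ) < (m:ℝ)/2 := by linarith
  have hτ := t0_spec hm hD
  have hτ0 := t0_pos hm hD
  by_contra h
  push_neg at h
  have hle : (t0 m b) ^ ((m:ℝ)/2) ≤ b ^ ((m:ℝ)/2) :=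
    Real.rpow_le_rpow hτ0.le h hp.le
  have : Dcoef m b * (t0 m b) ^ ((m:ℝ)/2) ≤ Dcoef m b * b ^ ((m:ℝ)/2) :=
    mul_le_mul_of_nonneg_left hle hD.le
  rw [neg_div] at h1
  linarith

lemma t0_lt (hm : 1 ≤ m) (hb : 1 < b) (hbd : b < d) (hD : 0 < Dcoef m b)
    (h2 : 0 < -(2 + (m:ℝ)) / (m:ℝ) + Dcoef m b * d ^ ((m:ℝ)/2)) : t0 m b < d := by
  have hm1 : (1:ℝ) ≤ m := by exact_mod_cast hm
  have hp : (0:ℝ) < (m:ℝ)/2 := by linarith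
  have hτ := t0_spec hm hD
  have hd0 : (0:ℝ) < d := by linarith
  by_contra h
  push_neg at h
  have hle : d ^ ((m:ℝ)/2) ≤ (t0 m b) ^ ((m:ℝ)/2) :=
    Real.rpow_le_rpow hd0.le h hp.le
  have : Dcoef m b * d ^ ((m:ℝ)/2) ≤ Dcoef m b * (t0 m b) ^ ((m:ℝ)/2) :=
    mul_le_mul_of_nonneg_left hle hD.le
  rw [neg_div] at h2
  linarith

end tzero

section absint

variable {m : ℕ} {b d : ℝ}

lemma int_abs (hm : 1 ≤ m) (hb : 1 < b) (hbd : b < d) (hD : 0 < Dcoef m b)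
    (h1 : -(2 + (m:ℝ)) / (m:ℝ) + Dcoef m b * b ^ ((m:ℝ)/2) < 0)
    (h2 : 0 < -(2 + (m:ℝ)) / (m:ℝ) + Dcoef m b * d ^ ((m:ℝ)/2)) :
    ∫ t in Set.Ici (0:ℝ), |fsp m b d t| = denom m b d := by
  have hm1 : (1:ℝ) ≤ m := by exact_mod_cast hm
  have hm0 : (m:ℝ) ≠ 0 := by linarith
  have hp : (0:ℝ) < (m:ℝ)/2 := by linarith
  have hb0 : (0:ℝ) < b := by linarith
  have hd0 : (0:ℝ) < d := by linarith
  have hτ0 : (0:ℝ) < t0 m b := t0_pos hm hD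
  have hτspec := t0_spec (b := b) hm hD
  have hbτ : b < t0 m b := t0_gt hm hb hD h1
  have hτd : t0 m b < d := t0_lt hm hb hbd hD h2
  -- step 1 : reduce to an interval integral over (1, d]
  have hmeas : MeasurableSet (Set.Ioc (1:ℝ) d) := measurableSet_Ioc
  have e1 : ∫ t in Set.Ici (0:ℝ), |fsp m b d t|
      = ∫ t in Set.Ici (0:ℝ), (Set.Ioc (1:ℝ) d).indicator (fun t => |fsp m b d t|) t := by
    apply MeasureTheory.setIntegral_congr_fun measurableSet_Ici
    intro t _
    by_cases htm : t ∈ Set.Ioc (1:ℝ) d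
    · rw [Set.indicator_of_mem htm]
    · rw [Set.indicator_of_notMem htm]
      show |fsp m b d t| = 0
      have : t ≤ 1 ∨ d < t := by
        rcases not_and_or.mp htm with h | h
        · exact Or.inl (le_of_not_gt h)
        · exact Or.inr (lt_of_not_ge h)
      rw [fsp_out m b d t hb hbd this, abs_zero]
  rw [e1, MeasureTheory.setIntegral_indicator hmeas,
    show Set.Ici (0:ℝ) ∩ Set.Ioc 1 d = Set.Ioc 1 d by
      rw [Set.inter_eq_self_of_subset_right]
      exact fun x hx => le_trans zero_le_one hx.1.le,
    ← intervalIntegral.integral_of_le (by linarith : (1:ℝ) ≤ d)]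
  -- sign descriptions on the three pieces
  have sgn1 : ∀ s : ℝ, 1 < s → s ≤ b →
      |fsp m b d s| = -((2+(m:ℝ))/(m:ℝ)) + (2*(1+(m:ℝ))/(m:ℝ)) * s ^ ((m:ℝ)/2) := by
    intro s hs1 hs2
    have hsp : 1 ≤ s ^ ((m:ℝ)/2) := by
      rw [← Real.one_rpow ((m:ℝ)/2)]
      exact Real.rpow_le_rpow zero_le_one hs1.le hp.le
    have hc2 : (0:ℝ) < 2*(1+(m:ℝ))/(m:ℝ) := by positivity
    have hid : 2*(1+(m:ℝ))/(m:ℝ) = (2+(m:ℝ))/(m:ℝ) + 1 := by field_simp; ring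
    have hmul := mul_le_mul_of_nonneg_left hsp hc2.le
    rw [fsp_br1 m b d s hs1 hs2, abs_of_nonpos (by nlinarith [hmul])]
    ring
  have sgn2 : ∀ s : ℝ, b < s → s ≤ t0 m b →
      |fsp m b d s| = (2+(m:ℝ))/(m:ℝ) + (-(Dcoef m b)) * s ^ ((m:ℝ)/2) := by
    intro s hs1 hs2
    have hs0 : (0:ℝ) < s := by linarith
    have hsp : s ^ ((m:ℝ)/2) ≤ (t0 m b) ^ ((m:ℝ)/2) :=
      Real.rpow_le_rpow hs0.le hs2 hp.le
    have : Dcoef m b * s ^ ((m:ℝ)/2) ≤ (2+(m:ℝ))/(m:ℝ) := by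
      calc Dcoef m b * s ^ ((m:ℝ)/2) ≤ Dcoef m b * (t0 m b) ^ ((m:ℝ)/2) :=
            mul_le_mul_of_nonneg_left hsp hD.le
        _ = (2+(m:ℝ))/(m:ℝ) := hτspec
    rw [fsp_br2 m b d s hb hs1 (by linarith), abs_of_nonpos (by rw [neg_div]; linarith)]
    ring
  have sgn3 : ∀ s : ℝ, t0 m b < s → s ≤ d →
      |fsp m b d s| = -((2+(m:ℝ))/(m:ℝ)) + Dcoef m b * s ^ ((m:ℝ)/2) := by
    intro s hs1 hs2
    have hsp : (t0 m b) ^ ((m:ℝ)/2) ≤ s ^ ((m:ℝ)/2) :=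
      Real.rpow_le_rpow hτ0.le hs1.le hp.le
    have : (2+(m:ℝ))/(m:ℝ) ≤ Dcoef m b * s ^ ((m:ℝ)/2) := by
      calc (2+(m:ℝ))/(m:ℝ) = Dcoef m b * (t0 m b) ^ ((m:ℝ)/2) := hτspec.symm
        _ ≤ Dcoef m b * s ^ ((m:ℝ)/2) := mul_le_mul_of_nonneg_left hsp hD.le
    rw [fsp_br2 m b d s hb (by linarith) hs2, abs_of_nonneg (by rw [neg_div]; linarith)]
    ring
  -- integrability of |fsp| on the pieces
  have iiA : IntervalIntegrable (fun t => |fsp m b d t|) volume 1 b := by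
    apply ii_congr ((cont_aux2 (-((2+(m:ℝ))/(m:ℝ))) (2*(1+(m:ℝ))/(m:ℝ)) ((m:ℝ)/2)
      (by positivity) _).intervalIntegrable)
    intro s hs
    rw [Set.uIoc_of_le hb.le] at hs
    exact sgn1 s hs.1 hs.2
  have iiB : IntervalIntegrable (fun t => |fsp m b d t|) volume b (t0 m b) := by
    apply ii_congr ((cont_aux2 ((2+(m:ℝ))/(m:ℝ)) (-(Dcoef m b)) ((m:ℝ)/2)
      (by positivity) _).intervalIntegrable)
    intro s hs
    rw [Set.uIoc_of_le hbτ.le] at hs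
    exact sgn2 s hs.1 hs.2
  have iiC : IntervalIntegrable (fun t => |fsp m b d t|) volume (t0 m b) d := by
    apply ii_congr ((cont_aux2 (-((2+(m:ℝ))/(m:ℝ))) (Dcoef m b) ((m:ℝ)/2)
      (by positivity) _).intervalIntegrable)
    intro s hs
    rw [Set.uIoc_of_le hτd.le] at hs
    exact sgn3 s hs.1 hs.2
  rw [← intervalIntegral.integral_add_adjacent_intervals (iiA.trans iiB) iiC,
    ← intervalIntegral.integral_add_adjacent_intervals iiA iiB]
  -- evaluate each piece
  have eA : ∫ t in (1:ℝ)..b, |fsp m b d t|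
      = ∫ t in (1:ℝ)..b, (-((2+(m:ℝ))/(m:ℝ)) + (2*(1+(m:ℝ))/(m:ℝ)) * t ^ ((m:ℝ)/2)) := by
    apply intervalIntegral.integral_congr_ae
    filter_upwards with s
    rw [Set.uIoc_of_le hb.le]
    intro hs
    exact sgn1 s hs.1 hs.2
  have eB : ∫ t in b..(t0 m b), |fsp m b d t|
      = ∫ t in b..(t0 m b), ((2+(m:ℝ))/(m:ℝ) + (-(Dcoef m b)) * t ^ ((m:ℝ)/2)) := by
    apply intervalIntegral.integral_congr_ae
    filter_upwards with s
    rw [Set.uIoc_of_le hbτ.le]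
    intro hs
    exact sgn2 s hs.1 hs.2
  have eC : ∫ t in (t0 m b)..d, |fsp m b d t|
      = ∫ t in (t0 m b)..d, (-((2+(m:ℝ))/(m:ℝ)) + Dcoef m b * t ^ ((m:ℝ)/2)) := by
    apply intervalIntegral.integral_congr_ae
    filter_upwards with s
    rw [Set.uIoc_of_le hτd.le]
    intro hs
    exact sgn3 s hs.1 hs.2
  rw [eA, eB, eC, int_eval2 _ _ _ _ _ hp, int_eval2 _ _ _ _ _ hp, int_eval2 _ _ _ _ _ hp,
    Real.one_rpow]
  -- final algebra
  have hbneg : b ^ (-(m:ℝ)/2) = (b ^ ((m:ℝ)/2))⁻¹ := by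
    rw [show (-(m:ℝ)/2) = -((m:ℝ)/2) by ring, Real.rpow_neg hb0.le]
  have hB : (0:ℝ) < b ^ ((m:ℝ)/2) := Real.rpow_pos_of_pos hb0 _
  have d1 : ((m:ℝ)/2+1) ≠ 0 := by linarith
  have hm2 : (2+(m:ℝ)) ≠ 0 := by linarith
  have hm3 : (1+(m:ℝ)) ≠ 0 := by linarith
  have hXB : (0:ℝ) < 2 * (b ^ ((m:ℝ)/2))⁻¹ - 1 := by
    have := hXpos hm hD; rwa [hbneg] at this
  have h2B : (0:ℝ) < 2 - b ^ ((m:ℝ)/2) := by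
    have he : (2 * (b ^ ((m:ℝ)/2))⁻¹ - 1) * b ^ ((m:ℝ)/2) = 2 - b ^ ((m:ℝ)/2) := by
      field_simp
    nlinarith [mul_pos hXB hB]
  have hτp : (t0 m b) ^ ((m:ℝ)/2)
      = (2+(m:ℝ)) * b ^ ((m:ℝ)/2) / (2*(1+(m:ℝ)) * (2 - b ^ ((m:ℝ)/2))) := by
    have h' : (t0 m b) ^ ((m:ℝ)/2) = (2+(m:ℝ))/(m:ℝ) / Dcoef m b := by
      rw [eq_div_iff hD.ne', mul_comm]
      exact hτspec
    rw [h']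
    simp only [Dcoef, hbneg]
    have hcX : (0:ℝ) < 2*(1+(m:ℝ))/(m:ℝ) * (2*(b^((m:ℝ)/2))⁻¹ - 1) :=
      mul_pos (by positivity) hXB
    rw [div_eq_div_iff hcX.ne' (by positivity : (2*(1+(m:ℝ)) * (2 - b ^ ((m:ℝ)/2)) : ℝ) ≠ 0)]
    field_simp
  have eτ1 : (t0 m b) ^ ((m:ℝ)/2+1)
      = ((2+(m:ℝ)) * b ^ ((m:ℝ)/2) / (2*(1+(m:ℝ)) * (2 - b ^ ((m:ℝ)/2)))) * t0 m b := by
    rw [Real.rpow_add hτ0, Real.rpow_one, hτp]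
  have eb1 : b ^ ((m:ℝ)/2+1) = b ^ ((m:ℝ)/2) * b := by
    rw [Real.rpow_add hb0, Real.rpow_one]
  have ed1 : d ^ (1+(m:ℝ)/2) = d ^ ((m:ℝ)/2) * d := by
    rw [show (1+(m:ℝ)/2) = ((m:ℝ)/2+1) by ring, Real.rpow_add hd0, Real.rpow_one]
  have ed2 : d ^ ((m:ℝ)/2+1) = d ^ ((m:ℝ)/2) * d := by
    rw [Real.rpow_add hd0, Real.rpow_one]
  simp only [denom, eτ1, eb1, ed1, ed2, hbneg, Dcoef]
  field_simp
  ring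

end absint

lemma ratio_eq_Wf {m : ℕ} {b d : ℝ} (hm : 1 ≤ m) (hS : (b, d) ∈ Sset m) :
    ratio m b d = Wf m b d := by
  simp only [Sset, Set.mem_setOf_eq] at hS
  obtain ⟨hb, hbd, hD, h1, h2, h3⟩ := hS
  have hmeasure : {t : ℝ | 0 ≤ t ∧ 1 ≤ |Lam m (fsp m b d) t|} = Set.Ioc 1 d :=
    level_set hm hb hbd h2 h3
  rw [ratio, hmeasure, Real.volume_Ioc, ENNReal.toReal_ofReal (by linarith : (0:ℝ) ≤ d - 1),
    int_abs hm hb hbd hD h1 h2, Wf]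

end Aux14

/-- For every `m ≥ 1`, the restricted weak-type constant of `Λ_m` over `F^sp_m` equals
`sup{ W(b,d,m) : (b,d) ∈ S_m }`. -/
theorem stmt_14 (m : ℕ) (hm : 1 ≤ m) :
    Rsp m = sSup {w : ℝ | ∃ b d : ℝ, (b, d) ∈ Sset m ∧ w = Wf m b d} := by
  unfold Rsp
  congr 1
  ext r
  simp only [Set.mem_setOf_eq]
  constructor
  · rintro ⟨b, d, hS, rfl⟩
    exact ⟨b, d, hS, (Aux14.ratio_eq_Wf hm hS).symm ▸ rfl⟩
  · rintro ⟨b, d, hS, rfl⟩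
    exact ⟨b, d, hS, (Aux14.ratio_eq_Wf hm hS).symm⟩
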